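/- Let (E, I) be a matroid on a finite ground set with nonnegative real weights w : E → ℝ. The greedy algorithm that scans elements in nonincreasing order of weight, adding an element whenever doing so preserves independence, returns a basis of maximum total weight among all bases of the matroid. -/

import Mathlib

/-- The greedy scan: process the list in order, adding an element whenever the
resulting set remains independent. -/
def greedy {α : Type*} [DecidableEq α] (Ind : Finset α → Prop) [DecidablePred Ind] :
    List α → Finset α → Finset α
  | [], G => G
  | x :: xs, G =>
      if Ind (insert x G) then greedy Ind xs (insert x G) else greedy Ind xs G

namespace GreedyAux

variable {α : Type*} [DecidableEq α] (Ind : Finset α → Prop) [DecidablePred Ind]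

lemma greedy_subset : ∀ (l : List α) (G : Finset α), G ⊆ greedy Ind l G
  | [], G => by simp [greedy]
  | a :: l, G => by
    simp only [greedy]
    split
    · exact (Finset.subset_insert a G).trans (greedy_subset l _)
    · exact greedy_subset l G

lemma greedy_subset_union : ∀ (l : List α) (G : Finset α),
    greedy Ind l G ⊆ G ∪ l.toFinset
  | [], G => by simp [greedy]
  | a :: l, G => by
    simp only [greedy]
    split
    · refine (greedy_subset_union l _).trans ?_
      intro x hx
      simp only [Finset.mem_union, Finset.mem_insert, List.toFinset_cons] at hx ⊢
      tauto
    · refine (greedy_subset_union l _).trans ?_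
      intro x hx
      simp only [Finset.mem_union, Finset.mem_insert, List.toFinset_cons] at hx ⊢
      tauto

lemma greedy_ind : ∀ (l : List α) (G : Finset α), Ind G → Ind (greedy Ind l G)
  | [], _, h => h
  | a :: l, G, h => by
    simp only [greedy]
    split
    · exact greedy_ind l _ ‹_›
    · exact greedy_ind l G h

lemma greedy_append : ∀ (l₁ l₂ : List α) (G : Finset α),
    greedy Ind (l₁ ++ l₂) G = greedy Ind l₂ (greedy Ind l₁ G)
  | [], l₂, G => rfl
  | a :: l₁, l₂, G => by
    simp only [greedy, List.cons_append]
    split <;> exact greedy_append l₁ l₂ _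

lemma greedy_max (hSub : ∀ I J : Finset α, J ⊆ I → Ind I → Ind J) :
    ∀ (l : List α) (G : Finset α) (x : α), x ∈ l →
      Ind (insert x (greedy Ind l G)) → x ∈ greedy Ind l G
  | [], _, x, hx, _ => by simp at hx
  | a :: l, G, x, hx, h => by
    by_cases hc : Ind (insert a G)
    · simp only [greedy, if_pos hc] at h ⊢
      rcases List.mem_cons.mp hx with rfl | hx'
      · exact greedy_subset Ind l _ (Finset.mem_insert_self x G)
      · exact greedy_max hSub l _ x hx' h
    · simp only [greedy, if_neg hc] at h ⊢
      rcases List.mem_cons.mp hx with rfl | hx'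
      · exact absurd (hSub _ _
          (Finset.insert_subset_insert x (greedy_subset Ind l G)) h) hc
      · exact greedy_max hSub l _ x hx' h

lemma greedy_prefix (l p q : List α) (h : p ++ q = l) (hnd : l.Nodup) :
    greedy Ind l ∅ ∩ p.toFinset = greedy Ind p ∅ := by
  subst h
  rw [greedy_append]
  apply Finset.Subset.antisymm
  · intro x hx
    obtain ⟨hx1, hx2⟩ := Finset.mem_inter.mp hx
    rcases Finset.mem_union.mp (greedy_subset_union Ind q (greedy Ind p ∅) hx1) with h1 | h1
    · exact h1
    · exact absurd (List.mem_toFinset.mp h1)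
        ((List.disjoint_of_nodup_append hnd) (List.mem_toFinset.mp hx2))
  · intro x hx
    refine Finset.mem_inter.mpr ⟨greedy_subset Ind q _ hx, ?_⟩
    have := Finset.mem_union.mp (greedy_subset_union Ind p ∅ hx)
    simpa using this

lemma card_le_greedy (hEmpty : Ind ∅)
    (hSub : ∀ I J : Finset α, J ⊆ I → Ind I → Ind J)
    (hAug : ∀ I J : Finset α, Ind I → Ind J → I.card < J.card →
      ∃ e ∈ J \ I, Ind (insert e I))
    (l p q : List α) (h : p ++ q = l) (hnd : l.Nodup)
    (B : Finset α) (hB : Ind B) :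
    (B ∩ p.toFinset).card ≤ (greedy Ind l ∅ ∩ p.toFinset).card := by
  rw [greedy_prefix Ind l p q h hnd]
  by_contra hlt
  push_neg at hlt
  have hGp : Ind (greedy Ind p ∅) := greedy_ind Ind p ∅ hEmpty
  have hBp : Ind (B ∩ p.toFinset) := hSub B _ Finset.inter_subset_left hB
  obtain ⟨e, he, hei⟩ := hAug _ _ hGp hBp hlt
  obtain ⟨heB, heG⟩ := Finset.mem_sdiff.mp he
  have hep : e ∈ p := List.mem_toFinset.mp (Finset.mem_inter.mp heB).2
  exact heG (greedy_max Ind hSub p ∅ e hep hei)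

lemma card_inter_insert (B s : Finset α) (a : α) (ha : a ∉ s) :
    (B ∩ insert a s).card = (B.erase a ∩ s).card + (if a ∈ B then 1 else 0) := by
  by_cases h : a ∈ B
  · rw [if_pos h]
    have h1 : B ∩ insert a s = insert a (B.erase a ∩ s) := by
      ext x
      simp only [Finset.mem_inter, Finset.mem_insert, Finset.mem_erase]
      constructor
      · rintro ⟨hxB, rfl | hxs⟩
        · exact Or.inl rfl
        · exact Or.inr ⟨⟨fun hxa => ha (hxa ▸ hxs), hxB⟩, hxs⟩
      · rintro (rfl | ⟨⟨_, hxB⟩, hxs⟩)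
        · exact ⟨h, Or.inl rfl⟩
        · exact ⟨hxB, Or.inr hxs⟩
    rw [h1, Finset.card_insert_of_notMem (by simp [ha])]
  · rw [if_neg h, Finset.erase_eq_of_notMem h, add_zero]
    congr 1
    ext x
    simp only [Finset.mem_inter, Finset.mem_insert]
    constructor
    · rintro ⟨hxB, rfl | hxs⟩
      · exact absurd hxB h
      · exact ⟨hxB, hxs⟩
    · exact fun ⟨hxB, hxs⟩ => ⟨hxB, Or.inr hxs⟩

/-- Abel-summation style comparison: if `G` dominates `B` (up to slack `d`) in
cardinality on every prefix of a nonincreasingly sorted list containing `B`,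
then the weight of `B` is at most that of `G` plus `d * c`. -/
lemma abel (w : α → ℝ) (hw : ∀ x, 0 ≤ w x) :
    ∀ (l : List α) (d : ℕ) (c : ℝ), 0 ≤ c → (∀ x ∈ l, w x ≤ c) →
      l.Pairwise (fun a b => w b ≤ w a) → l.Nodup →
      ∀ B G : Finset α, B ⊆ l.toFinset →
      (∀ p q : List α, p ++ q = l → (B ∩ p.toFinset).card ≤ (G ∩ p.toFinset).card + d) →
      ∑ j ∈ B, w j ≤ ∑ j ∈ G, w j + d * c
  | [], d, c, hc, _, _, _, B, G, hB, _ => by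
    have : B = ∅ := Finset.subset_empty.mp (by simpa using hB)
    subst this
    simp only [Finset.sum_empty]
    have h1 : (0:ℝ) ≤ ∑ j ∈ G, w j := Finset.sum_nonneg fun j _ => hw j
    positivity
  | a :: l', d, c, hc, hbound, hsort, hnd, B, G, hB, hpre => by
    have hal' : a ∉ l' := (List.nodup_cons.mp hnd).1
    have ha : a ∉ l'.toFinset := fun h => hal' (List.mem_toFinset.mp h)
    have hnd' : l'.Nodup := (List.nodup_cons.mp hnd).2
    obtain ⟨hwa, hsort'⟩ := List.pairwise_cons.mp hsort
    have hwa' : ∀ x ∈ l', w x ≤ w a := hwa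
    have hwa0 : 0 ≤ w a := hw a
    have hac : w a ≤ c := hbound a (List.mem_cons_self (a := a) (l := l'))
    have hB' : B.erase a ⊆ l'.toFinset := by
      intro x hx
      obtain ⟨hxa, hxB⟩ := Finset.mem_erase.mp hx
      have := hB hxB
      simp only [List.toFinset_cons, Finset.mem_insert] at this
      tauto
    have key : ∀ p q : List α, p ++ q = l' →
        (B.erase a ∩ p.toFinset).card + (if a ∈ B then 1 else 0)
          ≤ (G.erase a ∩ p.toFinset).card + (if a ∈ G then 1 else 0) + d := by
      intro p q h
      have hp : a ∉ p.toFinset := fun hh =>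
        ha (List.mem_toFinset.mpr (h ▸ List.mem_append_left q (List.mem_toFinset.mp hh)))
      have h2 := hpre (a :: p) q (by rw [List.cons_append, h])
      rw [List.toFinset_cons, card_inter_insert B _ a hp, card_inter_insert G _ a hp] at h2
      omega
    have hdwc : (d:ℝ) * w a ≤ (d:ℝ) * c :=
      mul_le_mul_of_nonneg_left hac (by positivity)
    by_cases hb : a ∈ B <;> by_cases hg : a ∈ G
    · have ih := abel w hw l' d (w a) hwa0 hwa' hsort' hnd' (B.erase a) (G.erase a) hB'
        (fun p q h => by have := key p q h; simp only [if_pos hb, if_pos hg] at this; omega)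
      rw [← Finset.sum_erase_add B _ hb, ← Finset.sum_erase_add G _ hg]
      linarith
    · have hd1 : 1 ≤ d := by
        have := key [] l' rfl
        simp only [List.toFinset_nil, Finset.inter_empty, Finset.card_empty,
          if_pos hb, if_neg hg] at this
        omega
      obtain ⟨e, rfl⟩ : ∃ e, d = e + 1 := ⟨d - 1, by omega⟩
      have ih := abel w hw l' e (w a) hwa0 hwa' hsort' hnd' (B.erase a) (G.erase a) hB'
        (fun p q h => by have := key p q h; simp only [if_pos hb, if_neg hg] at this; omega)
      rw [← Finset.sum_erase_add B _ hb, Finset.erase_eq_of_notMem hg] at *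
      push_cast
      have : ((e:ℝ) + 1) * w a ≤ ((e:ℝ) + 1) * c :=
        mul_le_mul_of_nonneg_left hac (by positivity)
      linarith
    · have ih := abel w hw l' (d + 1) (w a) hwa0 hwa' hsort' hnd' (B.erase a) (G.erase a) hB'
        (fun p q h => by have := key p q h; simp only [if_neg hb, if_pos hg] at this; omega)
      rw [Finset.erase_eq_of_notMem hb] at ih
      rw [← Finset.sum_erase_add G _ hg]
      push_cast at ih ⊢
      linarith
    · have ih := abel w hw l' d (w a) hwa0 hwa' hsort' hnd' (B.erase a) (G.erase a) hB'
        (fun p q h => by have := key p q h; simp only [if_neg hb, if_neg hg] at this; omega)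
      rw [Finset.erase_eq_of_notMem hb, Finset.erase_eq_of_notMem hg] at ih
      linarith

end GreedyAux

/-- Greedy algorithm on a matroid with nonnegative weights: scanning all
elements in nonincreasing order of weight and adding an element whenever
independence is preserved returns a basis (a maximal independent set) of
maximum total weight among all bases. -/
theorem greedy_max_weight_basis {α : Type*} [DecidableEq α] [Fintype α]
    (Ind : Finset α → Prop) [DecidablePred Ind]
    (hEmpty : Ind ∅)
    (hSubset : ∀ I J : Finset α, J ⊆ I → Ind I → Ind J)
    (hAug : ∀ I J : Finset α, Ind I → Ind J → I.card < J.card →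
      ∃ e ∈ J \ I, Ind (insert e I))
    (w : α → ℝ) (hw : ∀ x, 0 ≤ w x)
    (l : List α) (hnodup : l.Nodup) (hmem : ∀ x : α, x ∈ l)
    (hsorted : l.Pairwise (fun a b => w b ≤ w a)) :
    (Ind (greedy Ind l ∅) ∧
      ∀ J : Finset α, Ind J → greedy Ind l ∅ ⊆ J → J = greedy Ind l ∅) ∧
    (∀ B : Finset α, Ind B → (∀ J : Finset α, Ind J → B ⊆ J → J = B) →
      ∑ j ∈ B, w j ≤ ∑ j ∈ greedy Ind l ∅, w j) := by
  set G := greedy Ind l ∅ with hG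
  refine ⟨⟨GreedyAux.greedy_ind Ind l ∅ hEmpty, ?_⟩, ?_⟩
  · intro J hJ hGJ
    refine Finset.Subset.antisymm (fun x hxJ => ?_) hGJ
    exact GreedyAux.greedy_max Ind hSubset l ∅ x (hmem x)
      (hSubset J (insert x G) (Finset.insert_subset hxJ hGJ) hJ)
  · intro B hB _
    have hcount : ∀ p q : List α, p ++ q = l →
        (B ∩ p.toFinset).card ≤ (G ∩ p.toFinset).card + 0 := by
      intro p q h
      rw [Nat.add_zero]
      exact GreedyAux.card_le_greedy Ind hEmpty hSubset hAug l p q h hnodup B hB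
    have habel := GreedyAux.abel w hw l 0 (∑ x, w x)
      (Finset.sum_nonneg fun j _ => hw j)
      (fun x _ => Finset.single_le_sum (fun i _ => hw i) (Finset.mem_univ x))
      hsorted hnodup B G
      (fun x _ => List.mem_toFinset.mpr (hmem x)) hcount
    simpa using habel
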